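/- The unweighted 4-cycle with Laplacian L satisfies CD_2(0, 4/3): combining the case analyses, for every u: {x,y₁,y₂,z} → (0,∞) whose pressure v = 2u satisfies −Lv(x) > 0 and −Lv(x) ≥ −Lv(y₁), −Lv(x) ≥ −Lv(y₂), one has 𝒟₂(u)(x) ≥ (3/4)(−Lv(x))², where 𝒟₂(u)(x) = 2Lu²(y₁) + 2Lu²(y₂) − 4Lu²(x). -/

import Mathlib

inductive SqV : Type
  | x | y1 | y2 | z
  deriving DecidableEq

instance : Fintype SqV :=
  ⟨{SqV.x, SqV.y1, SqV.y2, SqV.z}, fun a => by cases a <;> simp⟩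

open SqV in
def sqK : SqV → SqV → ℝ
  | .x, .y1 => 1
  | .x, .y2 => 1
  | .y1, .x => 1
  | .y2, .x => 1
  | .z, .y1 => 1
  | .z, .y2 => 1
  | .y1, .z => 1
  | .y2, .z => 1
  | _, _ => 0

noncomputable def sqL (f : SqV → ℝ) (w : SqV) : ℝ :=
  ∑ w' : SqV, sqK w w' * (f w' - f w)

lemma sqL_expand (f : SqV → ℝ) (w : SqV) :
    sqL f w = sqK w .x * (f .x - f w) + sqK w .y1 * (f .y1 - f w)
      + sqK w .y2 * (f .y2 - f w) + sqK w .z * (f .z - f w) := by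
  rw [sqL, show (Finset.univ : Finset SqV) = {SqV.x, SqV.y1, SqV.y2, SqV.z} from by decide]
  simp [Finset.sum_insert, Finset.mem_insert]
  ring

lemma core_half (a b c d : ℝ) (hc : 0 < c) (hd0 : 0 < d) (hcb : c ≤ b)
    (h3 : b + c < 2*a) (h1 : 3*b + c ≤ 3*a + d) (h2 : 3*c + b ≤ 3*a + d) :
    0 ≤ 4*d^2 + 12*a*b + 12*a*c - 11*b^2 - 11*c^2 - 6*b*c := by
  rcases le_or_gt (3*b + c) (3*a) with h | h
  · have h2' : 3*c + b ≤ 3*a := by linarith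
    nlinarith [mul_nonneg (by linarith : (0:ℝ) ≤ 3*a - 3*b - c) (hc.le.trans hcb),
      mul_nonneg (by linarith : (0:ℝ) ≤ 3*a - 3*c - b) hc.le,
      sq_nonneg (b+c), sq_nonneg d]
  · have hd : 3*b + c - 3*a ≤ d := by linarith
    nlinarith [mul_nonneg (sub_nonneg.2 hd) (by linarith : (0:ℝ) ≤ d + (3*b + c - 3*a)),
      mul_nonneg hc.le (sub_nonneg.2 hcb), sq_nonneg (6*a - 5*b - c)]

lemma core (a b c d : ℝ) (hb : 0 < b) (hc : 0 < c) (hd0 : 0 < d)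
    (h3 : b + c < 2*a) (h1 : 3*b + c ≤ 3*a + d) (h2 : 3*c + b ≤ 3*a + d) :
    0 ≤ 4*d^2 + 12*a*b + 12*a*c - 11*b^2 - 11*c^2 - 6*b*c := by
  rcases le_total c b with hcb | hbc
  · exact core_half a b c d hc hd0 hcb h3 h1 h2
  · have := core_half a c b d hb hd0 hbc (by linarith) h2 h1
    linarith

theorem square_CD_two (u : SqV → ℝ) (hu : ∀ w, 0 < u w)
    (hpos : 0 < -sqL (fun w => 2 * u w) SqV.x)
    (hy1 : -sqL (fun w => 2 * u w) SqV.x ≥ -sqL (fun w => 2 * u w) SqV.y1)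
    (hy2 : -sqL (fun w => 2 * u w) SqV.x ≥ -sqL (fun w => 2 * u w) SqV.y2) :
    2 * sqL (fun w => (u w) ^ 2) SqV.y1 + 2 * sqL (fun w => (u w) ^ 2) SqV.y2
      - 4 * sqL (fun w => (u w) ^ 2) SqV.x
      ≥ (3 / 4) * (-sqL (fun w => 2 * u w) SqV.x) ^ 2 := by
  simp only [sqL_expand, sqK] at *
  set a := u SqV.x
  set b := u SqV.y1
  set c := u SqV.y2
  set d := u SqV.z
  have hb := hu SqV.y1
  have hc := hu SqV.y2
  have hd := hu SqV.z
  have h3 : b + c < 2*a := by linarith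
  have h1 : 3*b + c ≤ 3*a + d := by linarith
  have h2 : 3*c + b ≤ 3*a + d := by linarith
  nlinarith [core a b c d hb hc hd h3 h1 h2]
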